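/- (Recursive strict feasibility.) Let g be C¹ on an open set containing the compact box I ⊂ ℝ^{n_u} with strict univariate Lipschitz constants κ_i > 0 on I. Let (u_k)_{k≥0} be a sequence in I with g(u_0) < 0 such that for every k the condition g(u_k) + Σ_{i=1}^{n_u} κ_i |u_{k+1,i} − u_{k,i}| ≤ 0 holds. Then g(u_k) < 0 for every k ≥ 0. -/

import Mathlib

lemma key_step {n : ℕ} (uL uU : Fin n → ℝ)
    (g : (Fin n → ℝ) → ℝ)
    (U : Set (Fin n → ℝ)) (hUopen : IsOpen U) (hIU : Set.Icc uL uU ⊆ U)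
    (hg : ContDiffOn ℝ 1 g U)
    (κ : Fin n → ℝ)
    (hκ : ∀ u ∈ Set.Icc uL uU, ∀ i, |fderiv ℝ g u (Pi.single i 1)| < κ i)
    (a b : Fin n → ℝ) (ha : a ∈ Set.Icc uL uU) (hb : b ∈ Set.Icc uL uU)
    (hab : a ≠ b) :
    |g b - g a| < ∑ i, κ i * |b i - a i| := by
  have hdiff : ∀ x ∈ Set.Icc uL uU, DifferentiableAt ℝ g x := fun x hx =>
    (hg.differentiableOn one_ne_zero).differentiableAt (hUopen.mem_nhds (hIU hx))
  -- segment membership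
  have hseg : ∀ t ∈ Set.Icc (0:ℝ) 1, a + t • (b - a) ∈ Set.Icc uL uU := by
    intro t ht
    have := (convex_Icc uL uU) ha hb (by linarith [ht.2] : (0:ℝ) ≤ 1 - t) ht.1 (by ring)
    convert this using 1
    module
  set φ : ℝ → ℝ := fun t => g (a + t • (b - a)) with hφ
  set φ' : ℝ → ℝ := fun t => fderiv ℝ g (a + t • (b - a)) (b - a) with hφ'
  have hderiv : ∀ t ∈ Set.Icc (0:ℝ) 1, HasDerivAt φ (φ' t) t := by
    intro t ht
    have hline : HasDerivAt (fun s : ℝ => a + s • (b - a)) (b - a) t := by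
      simpa using ((hasDerivAt_id t).smul_const (b - a)).const_add a
    exact ((hdiff _ (hseg t ht)).hasFDerivAt.comp_hasDerivAt t hline)
  have hcont : ContinuousOn φ (Set.Icc 0 1) := fun t ht =>
    ((hderiv t ht).continuousAt).continuousWithinAt
  obtain ⟨c, hc, hceq⟩ := exists_hasDerivAt_eq_slope φ φ' (by norm_num) hcont
    (fun t ht => hderiv t (Set.mem_Icc_of_Ioo ht))
  have hc01 : c ∈ Set.Icc (0:ℝ) 1 := Set.mem_Icc_of_Ioo hc
  have hval : g b - g a = fderiv ℝ g (a + c • (b - a)) (b - a) := by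
    have : φ 1 - φ 0 = g b - g a := by simp [hφ]
    have h2 : φ' c = g b - g a := by rw [hceq, this]; ring
    rw [← h2]
  set x := a + c • (b - a) with hx
  have hxI : x ∈ Set.Icc uL uU := hseg c hc01
  have hexp : fderiv ℝ g x (b - a)
      = ∑ i, (b i - a i) * fderiv ℝ g x (Pi.single i 1) := by
    have hba : (b - a) = ∑ i, (b i - a i) • (Pi.single i 1 : Fin n → ℝ) := by
      ext j; simp [Finset.sum_apply, Pi.single_apply]
    conv_lhs => rw [hba]
    simp [smul_eq_mul]
  obtain ⟨i₀, hi₀⟩ : ∃ i, b i ≠ a i := by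
    by_contra h; push_neg at h; exact hab (funext fun i => (h i).symm)
  calc |g b - g a| = |∑ i, (b i - a i) * fderiv ℝ g x (Pi.single i 1)| := by
        rw [hval, hexp]
    _ ≤ ∑ i, |(b i - a i) * fderiv ℝ g x (Pi.single i 1)| :=
        Finset.abs_sum_le_sum_abs _ _
    _ < ∑ i, κ i * |b i - a i| := by
        apply Finset.sum_lt_sum
        · intro i _
          rw [abs_mul, mul_comm]
          exact mul_le_mul_of_nonneg_right (le_of_lt (hκ x hxI i)) (abs_nonneg _)
        · refine ⟨i₀, Finset.mem_univ _, ?_⟩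
          rw [abs_mul, mul_comm]
          exact (mul_lt_mul_of_pos_right (hκ x hxI i₀)
            (abs_pos.mpr (sub_ne_zero.mpr hi₀)))

/-- Recursive strict feasibility: if `g(u 0) < 0` and each iterate
satisfies `g (u k) + Σ_i κ i * |u (k+1) i - u k i| ≤ 0`, where the `κ i` are strict
univariate Lipschitz constants for the C¹ function `g` on the box `I = Icc uL uU`
containing all iterates, then `g (u k) < 0` for every `k`. -/
theorem recursive_strict_feasibility
    {n : ℕ} (uL uU : Fin n → ℝ)
    (g : (Fin n → ℝ) → ℝ)
    (U : Set (Fin n → ℝ)) (hUopen : IsOpen U) (hIU : Set.Icc uL uU ⊆ U)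
    (hg : ContDiffOn ℝ 1 g U)
    (κ : Fin n → ℝ) (hκpos : ∀ i, 0 < κ i)
    (hκ : ∀ u ∈ Set.Icc uL uU, ∀ i, |fderiv ℝ g u (Pi.single i 1)| < κ i)
    (u : ℕ → (Fin n → ℝ)) (huI : ∀ k, u k ∈ Set.Icc uL uU)
    (h0 : g (u 0) < 0)
    (hrec : ∀ k, g (u k) + ∑ i, κ i * |u (k + 1) i - u k i| ≤ 0) :
    ∀ k, g (u k) < 0 := by
  intro k
  induction k with
  | zero => exact h0
  | succ k ih =>
    by_cases heq : u k = u (k + 1)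
    · rwa [← heq]
    · have hkey := key_step uL uU g U hUopen hIU hg κ hκ (u k) (u (k + 1))
        (huI k) (huI (k + 1)) heq
      have h1 := hrec k
      have h2 : g (u (k + 1)) ≤ g (u k) + |g (u (k + 1)) - g (u k)| := by
        have := le_abs_self (g (u (k + 1)) - g (u k)); linarith
      linarith
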